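/- Let U, V, W be finite-dimensional real normed spaces, let Z ⊆ U, X ⊆ V, Y ⊆ W be nonempty convex compact sets, and let f : Y → X be an affine map. If dim f(Y) + dim Z < dim X, then the closure, in the finite-dimensional normed space of affine maps U → V, of the set {g : g an affine map U → V with g(Z) ⊆ X and g(Z) ∩ f(Y) = ∅} equals the whole set Hom(Z, X) = {g : g an affine map U → V with g(Z) ⊆ X}. -/

import Mathlib

open Set Pointwise
open scoped NNReal

/-- The dimension of a convex set: the dimension of the direction of its affine span. -/
noncomputable def convDim {V : Type*} [AddCommGroup V] [Module ℝ V] (s : Set V) : ℕ :=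
  Module.finrank ℝ (affineSpan ℝ s).direction

section Aux

variable {V : Type*} [NormedAddCommGroup V] [NormedSpace ℝ V] [FiniteDimensional ℝ V]

lemma convDim_image_le' {W : Type*} [NormedAddCommGroup W] [NormedSpace ℝ W]
    [FiniteDimensional ℝ W] (f : V →ᵃ[ℝ] W) (s : Set V) :
    convDim (⇑f '' s) ≤ convDim s := by
  unfold convDim
  rw [← AffineSubspace.map_span, AffineSubspace.map_direction]
  exact Submodule.finrank_map_le _ _

lemma exists_small_avoid' {E F : Submodule ℝ V}
    (h : Module.finrank ℝ F < Module.finrank ℝ E) (c : V) {δ : ℝ} (hδ : 0 < δ) :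
    ∃ v ∈ E, ‖v‖ < δ ∧ v - c ∉ F := by
  by_contra hcon
  push_neg at hcon
  have hc : c ∈ F := by
    have := hcon 0 E.zero_mem (by simpa using hδ)
    have := F.neg_mem this
    simpa using this
  have hEF : E ≤ F := by
    intro e he
    rcases eq_or_ne e 0 with rfl | hne
    · exact F.zero_mem
    · have hnorm : 0 < ‖e‖ := norm_pos_iff.mpr hne
      set w := (δ / (2 * ‖e‖)) • e with hw
      have hwE : w ∈ E := E.smul_mem _ he
      have hwnorm : ‖w‖ < δ := by
        rw [hw, norm_smul, Real.norm_eq_abs, abs_of_pos (by positivity)]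
        rw [div_mul_eq_mul_div]
        rw [div_lt_iff₀ (by positivity)]
        nlinarith
      have hwF : w ∈ F := by
        have := F.add_mem (hcon w hwE hwnorm) hc
        simpa using this
      have h2 : ((2 * ‖e‖) / δ) • w ∈ F := F.smul_mem _ hwF
      have : ((2 * ‖e‖) / δ) • w = e := by
        rw [hw, smul_smul]
        have : 2 * ‖e‖ / δ * (δ / (2 * ‖e‖)) = 1 := by field_simp
        rw [this, one_smul]
      rwa [this] at h2
  exact absurd (Submodule.finrank_mono hEF) (by omega)

omit [FiniteDimensional ℝ V] in
lemma exists_ball_of_mem_intrinsicInterior' {X : Set V} {x₀ : V}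
    (h : x₀ ∈ intrinsicInterior ℝ X) :
    ∃ r > 0, ∀ p ∈ affineSpan ℝ X, dist p x₀ < r → p ∈ X := by
  obtain ⟨y, hy, rfl⟩ := h
  rw [mem_interior_iff_mem_nhds, Metric.mem_nhds_iff] at hy
  obtain ⟨r, hr, hball⟩ := hy
  refine ⟨r, hr, fun p hp hd => ?_⟩
  have : (⟨p, hp⟩ : affineSpan ℝ X) ∈ Metric.ball y r := by
    simpa [Metric.mem_ball, Subtype.dist_eq] using hd
  exact hball this

omit [FiniteDimensional ℝ V] in
lemma continuous_eval' {U : Type*} [NormedAddCommGroup U] [NormedSpace ℝ U] (z : U) :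
    Continuous fun g : U →ᴬ[ℝ] V => g z := by
  have : LipschitzWith (‖z‖₊ + 1) (fun g : U →ᴬ[ℝ] V => g z) := by
    apply LipschitzWith.of_dist_le_mul
    intro g h
    rw [dist_eq_norm, dist_eq_norm, ← ContinuousAffineMap.sub_apply]
    set k := g - h
    have hk : k z = k.contLinear z + k 0 := by
      conv_lhs => rw [congrFun k.decomp z]
      rfl
    rw [hk]
    calc ‖k.contLinear z + k 0‖ ≤ ‖k.contLinear z‖ + ‖k 0‖ := norm_add_le _ _
      _ ≤ ‖k.contLinear‖ * ‖z‖ + ‖k‖ :=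
        add_le_add (k.contLinear.le_opNorm z) k.norm_image_zero_le
      _ ≤ ‖k‖ * ‖z‖ + ‖k‖ := by
        gcongr; exact k.norm_contLinear_le
      _ = ((‖z‖₊ + 1 : ℝ≥0) : ℝ) * ‖k‖ := by push_cast [coe_nnnorm]; ring
  exact this.continuous

end Aux

/-- Let `Z ⊆ U`, `X ⊆ V`, `Y ⊆ W` be nonempty convex compact sets in
finite-dimensional real normed spaces and `f : Y → X` affine. If
`dim f(Y) + dim Z < dim X`, then the closure (in the normed space of affine maps
`U → V`) of `{g : g(Z) ⊆ X, g(Z) ∩ f(Y) = ∅}` equals all of `Hom(Z, X)`. -/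
theorem closure_complementing_eq_hom {U V W : Type*}
    [NormedAddCommGroup U] [NormedSpace ℝ U] [FiniteDimensional ℝ U]
    [NormedAddCommGroup V] [NormedSpace ℝ V] [FiniteDimensional ℝ V]
    [NormedAddCommGroup W] [NormedSpace ℝ W] [FiniteDimensional ℝ W]
    (Z : Set U) (X : Set V) (Y : Set W)
    (hZne : Z.Nonempty) (hZconv : Convex ℝ Z) (hZcomp : IsCompact Z)
    (hXne : X.Nonempty) (hXconv : Convex ℝ X) (hXcomp : IsCompact X)
    (hYne : Y.Nonempty) (hYconv : Convex ℝ Y) (hYcomp : IsCompact Y)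
    (f : W →ᵃ[ℝ] V) (hf : ⇑f '' Y ⊆ X)
    (hdim : convDim (⇑f '' Y) + convDim Z < convDim X) :
    closure {g : U →ᴬ[ℝ] V | ⇑g '' Z ⊆ X ∧ ⇑g '' Z ∩ ⇑f '' Y = ∅} =
      {g : U →ᴬ[ℝ] V | ⇑g '' Z ⊆ X} := by
  have hTclosed : IsClosed {g : U →ᴬ[ℝ] V | ⇑g '' Z ⊆ X} := by
    have hset : {g : U →ᴬ[ℝ] V | ⇑g '' Z ⊆ X} = ⋂ z ∈ Z, {g | g z ∈ X} := by
      ext g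
      simp [image_subset_iff, subset_def]
    rw [hset]
    exact isClosed_biInter fun z _ => hXcomp.isClosed.preimage (continuous_eval' z)
  apply Set.Subset.antisymm
  · exact closure_minimal (fun g hg => hg.1) hTclosed
  intro g hg
  rw [Metric.mem_closure_iff]
  intro ε hε
  -- a relative interior point of X
  obtain ⟨x₀, hx₀⟩ := hXne.intrinsicInterior hXconv
  have hx₀X : x₀ ∈ X := intrinsicInterior_subset hx₀
  obtain ⟨r, hr, hball⟩ := exists_ball_of_mem_intrinsicInterior' hx₀
  set K := ContinuousAffineMap.const ℝ U x₀ with hK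
  set C := ‖K - g‖ + 1 with hC
  have hC0 : 0 < C := by positivity
  set t := min 1 (ε / (2 * C)) with ht
  have ht0 : 0 < t := lt_min one_pos (by positivity)
  have ht1 : t ≤ 1 := min_le_left _ _
  set gt := g + t • (K - g) with hgt
  have hgtapp : ∀ u : U, gt u = g u + t • (x₀ - g u) := by
    intro u
    simp [hgt, hK, ContinuousAffineMap.add_apply, ContinuousAffineMap.smul_apply,
      ContinuousAffineMap.sub_apply, ContinuousAffineMap.coe_const]
  -- dimension counting
  obtain ⟨y₀, hy₀⟩ := hYne
  obtain ⟨z₀, hz₀⟩ := hZne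
  set E := (affineSpan ℝ X).direction with hE
  set d₁ := (affineSpan ℝ (⇑f '' Y)).direction with hd₁
  set d₂ := (affineSpan ℝ (⇑gt '' Z)).direction with hd₂
  have hd2le : Module.finrank ℝ d₂ ≤ convDim Z := by
    have := convDim_image_le' gt.toAffineMap Z
    simpa [convDim] using this
  have hFE : Module.finrank ℝ (d₁ ⊔ d₂ : Submodule ℝ V) < Module.finrank ℝ E := by
    have hsum := Submodule.finrank_sup_add_finrank_inf_eq d₁ d₂
    have h1 : Module.finrank ℝ d₁ = convDim (⇑f '' Y) := rfl
    have h2 : Module.finrank ℝ E = convDim X := rfl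
    omega
  have hδ0 : 0 < min (t * r) (ε / 2) := lt_min (by positivity) (by positivity)
  obtain ⟨v, hvE, hvnorm, hvF⟩ :=
    exists_small_avoid' hFE (f y₀ - gt z₀) hδ0
  have hvtr : ‖v‖ < t * r := lt_of_lt_of_le hvnorm (min_le_left _ _)
  have hvε : ‖v‖ < ε / 2 := lt_of_lt_of_le hvnorm (min_le_right _ _)
  set g' := gt + ContinuousAffineMap.const ℝ U v with hg'
  have hg'app : ∀ u : U, g' u = gt u + v := by
    intro u
    simp [hg', ContinuousAffineMap.add_apply, ContinuousAffineMap.coe_const]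
  refine ⟨g', ⟨?_, ?_⟩, ?_⟩
  · -- g' '' Z ⊆ X
    rintro _ ⟨z, hz, rfl⟩
    have hgz : g z ∈ X := hg (mem_image_of_mem _ hz)
    set x' := t⁻¹ • v +ᵥ x₀ with hx'
    have hx'span : x' ∈ affineSpan ℝ X :=
      AffineSubspace.vadd_mem_of_mem_direction (E.smul_mem t⁻¹ hvE)
        (subset_affineSpan ℝ X hx₀X)
    have hx'X : x' ∈ X := by
      apply hball x' hx'span
      have hd : dist x' x₀ = ‖t⁻¹ • v‖ := by
        rw [hx', vadd_eq_add, dist_eq_norm, add_sub_cancel_right]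
      rw [hd, norm_smul, Real.norm_eq_abs, abs_of_pos (by positivity),
        inv_mul_lt_iff₀ ht0]
      exact hvtr
    have hcomb := hXconv hgz hx'X (by linarith : (0:ℝ) ≤ 1 - t) (le_of_lt ht0)
      (by ring)
    have heq : (1 - t) • g z + t • x' = g' z := by
      rw [hg'app, hgtapp, hx', vadd_eq_add, smul_add, smul_smul,
        mul_inv_cancel₀ ht0.ne']
      module
    rwa [heq] at hcomb
  · -- disjointness
    rw [Set.eq_empty_iff_forall_notMem]
    rintro p ⟨⟨z, hz, rfl⟩, y, hy, hpy⟩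
    apply hvF
    have hveq : v = f y - gt z := by
      rw [hpy, hg'app]
      abel
    have h1 : f y - f y₀ ∈ d₁ := by
      have := AffineSubspace.vsub_mem_direction
        (subset_affineSpan ℝ (⇑f '' Y) ⟨y, hy, rfl⟩)
        (subset_affineSpan ℝ (⇑f '' Y) ⟨y₀, hy₀, rfl⟩)
      simpa [vsub_eq_sub] using this
    have h2 : gt z - gt z₀ ∈ d₂ := by
      have := AffineSubspace.vsub_mem_direction
        (subset_affineSpan ℝ (⇑gt '' Z) ⟨z, hz, rfl⟩)
        (subset_affineSpan ℝ (⇑gt '' Z) ⟨z₀, hz₀, rfl⟩)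
      simpa [vsub_eq_sub] using this
    have heq2 : v - (f y₀ - gt z₀) = (f y - f y₀) - (gt z - gt z₀) := by
      rw [hveq]; abel
    rw [heq2]
    exact Submodule.sub_mem _ (Submodule.mem_sup_left h1) (Submodule.mem_sup_right h2)
  · -- distance
    have hKg : ‖K - g‖ ≤ C := by rw [hC]; linarith
    have hconstv : ‖ContinuousAffineMap.const ℝ U v‖ = ‖v‖ := by
      rw [ContinuousAffineMap.norm_def]
      simp [ContinuousAffineMap.const_contLinear, ContinuousAffineMap.coe_const]
    have hdiff : g - g' = -(t • (K - g) + ContinuousAffineMap.const ℝ U v) := by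
      rw [hg', hgt]; abel
    rw [dist_eq_norm, hdiff, norm_neg]
    have hsm : ‖t • (K - g)‖ = t * ‖K - g‖ := by
      rw [norm_smul t (K - g), Real.norm_eq_abs, abs_of_pos ht0]
    have hb : ‖t • (K - g) + ContinuousAffineMap.const ℝ U v‖
        ≤ t * ‖K - g‖ + ‖v‖ := by
      refine le_trans (norm_add_le _ _) ?_
      rw [hsm, hconstv]
    have htC : t * ‖K - g‖ ≤ ε / 2 := by
      have h1 : t ≤ ε / (2 * C) := min_le_right _ _
      have h2 : t * ‖K - g‖ ≤ t * C := mul_le_mul_of_nonneg_left hKg ht0.le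
      have h3 : t * C ≤ (ε / (2 * C)) * C := mul_le_mul_of_nonneg_right h1 hC0.le
      have h4 : (ε / (2 * C)) * C = ε / 2 := by field_simp
      linarith
    linarith
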